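/- Let φ : ℝ^{d_k} → H be a feature map into an inner-product space, and define sequences by u_t = v_t − Σ_{i=1}^{t-1} ⟨φ(k_i), φ(k_t)⟩ u_i and S_t = Σ_{i=1}^t u_i φ(k_i)ᵀ (with S_0 = 0). Then S_t satisfies the kernelized delta-rule recursion S_t = S_{t-1}(I − φ(k_t)φ(k_t)ᵀ) + v_t φ(k_t)ᵀ. -/

import Mathlib

/-- Kernelized delta rule: with feature map `φ : ℝ^{d_k} → H` into a real inner-product
space, `u_t = v_t − Σ_{i<t} ⟨φ(k_i), φ(k_t)⟩ u_i` and
`S_t x = Σ_{i<t} ⟨φ(k_i), x⟩ u_i` (so `S_0 = 0`), the memory satisfies the recursion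
`S_{t+1} x = S_t ((I − φ(k_t)φ(k_t)ᵀ) x) + ⟨φ(k_t), x⟩ v_t`. -/
theorem kernelized_delta_rule {dk dv : ℕ} {H : Type*}
    [NormedAddCommGroup H] [InnerProductSpace ℝ H]
    (φ : (Fin dk → ℝ) → H) (k : ℕ → Fin dk → ℝ) (v u : ℕ → Fin dv → ℝ)
    (hu : ∀ t, u t = v t - ∑ i ∈ Finset.range t,
        (inner ℝ (φ (k i)) (φ (k t)) : ℝ) • u i)
    (S : ℕ → H → Fin dv → ℝ)
    (hS : ∀ t x, S t x = ∑ i ∈ Finset.range t, (inner ℝ (φ (k i)) x : ℝ) • u i) :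
    ∀ t x, S (t + 1) x
        = S t (x - (inner ℝ (φ (k t)) x : ℝ) • φ (k t))
          + (inner ℝ (φ (k t)) x : ℝ) • v t := by
  intro t x
  simp only [hS, Finset.sum_range_succ, inner_sub_right, inner_smul_right, sub_smul, smul_smul]
  rw [Finset.sum_sub_distrib, hu t]
  simp only [smul_sub, Finset.smul_sum, smul_smul]
  ring_nf
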